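/- The complete bipartite graph K₃,₃ admits a (2,2)-NZF: an orientation and an assignment φ : E(K₃,₃) → ℝ² satisfying Kirchhoff's law at each vertex such that ‖φ(e)‖ = 1 for every edge. In fact one may take all flow values among the three cube roots of unity viewed as vectors in ℝ². -/

import Mathlib

open scoped BigOperators

noncomputable section

/-- The vector `(x, y)` in the Euclidean plane `ℝ²`. -/
def vec2 (x y : ℝ) : EuclideanSpace ℝ (Fin 2) := (WithLp.equiv 2 (Fin 2 → ℝ)).symm ![x, y]

/-- `f` is a `d`-dimensional nowhere-zero `r`-flow ((r,d)-NZF) on the graph `G`.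
We encode an orientation together with a flow as a skew-symmetric function on ordered
pairs of vertices, supported on adjacent pairs, whose values (on edges) have Euclidean
norm in `[1, r-1]`, and which satisfies Kirchhoff's law at every vertex. -/
def IsNZF {V : Type} [Fintype V] (G : SimpleGraph V) (d : ℕ) (r : ℝ)
    (f : V → V → EuclideanSpace ℝ (Fin d)) : Prop :=
  (∀ u v, f u v = - f v u) ∧
  (∀ u v, ¬ G.Adj u v → f u v = 0) ∧
  (∀ u v, G.Adj u v → 1 ≤ ‖f u v‖ ∧ ‖f u v‖ ≤ r - 1) ∧
  (∀ v, ∑ u, f v u = 0)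

/-- `G` admits an `(r,d)`-NZF. -/
def HasNZF {V : Type} [Fintype V] (G : SimpleGraph V) (d : ℕ) (r : ℝ) : Prop :=
  ∃ f, IsNZF G d r f

/-- A graph is bridgeless if none of its edges is a bridge. -/
def Bridgeless {V : Type} (G : SimpleGraph V) : Prop :=
  ∀ e ∈ G.edgeSet, ¬ G.IsBridge e

/-- The three cube roots of unity viewed as unit vectors of `ℝ²`. -/
def cubeRoots : Set (EuclideanSpace ℝ (Fin 2)) :=
  {vec2 1 0, vec2 (-1/2) (Real.sqrt 3 / 2), vec2 (-1/2) (-(Real.sqrt 3 / 2))}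

/-- The three cube roots of unity as a function on `Fin 3`. -/
def w3 : Fin 3 → EuclideanSpace ℝ (Fin 2) :=
  ![vec2 1 0, vec2 (-1/2) (Real.sqrt 3 / 2), vec2 (-1/2) (-(Real.sqrt 3 / 2))]

lemma norm_vec2 (x y : ℝ) : ‖vec2 x y‖ = Real.sqrt (x ^ 2 + y ^ 2) := by
  rw [EuclideanSpace.norm_eq]
  simp [vec2, Fin.sum_univ_two, Real.norm_eq_abs, sq_abs]

lemma norm_vec2_one (x y : ℝ) (h : x ^ 2 + y ^ 2 = 1) : ‖vec2 x y‖ = 1 := by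
  rw [norm_vec2, h]; exact Real.sqrt_one

lemma norm_w3 (k : Fin 3) : ‖w3 k‖ = 1 := by
  have h3 := Real.sq_sqrt (show (0:ℝ) ≤ 3 by norm_num)
  fin_cases k <;>
    · simp only [w3, Matrix.cons_val_zero, Matrix.cons_val_one, Matrix.head_cons,
        Matrix.cons_val_two, Matrix.tail_cons]
      exact norm_vec2_one _ _ (by nlinarith)

lemma w3_mem (k : Fin 3) : w3 k ∈ cubeRoots := by
  fin_cases k <;> simp [w3, cubeRoots]

lemma vec2_add (a b c d : ℝ) : vec2 a b + vec2 c d = vec2 (a+c) (b+d) := by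
  ext i
  fin_cases i <;> simp [vec2]

lemma sum_w3 : w3 0 + w3 1 + w3 2 = 0 := by
  simp only [w3, Matrix.cons_val_zero, Matrix.cons_val_one, Matrix.head_cons,
    Matrix.cons_val_two, Matrix.tail_cons, vec2_add]
  have : vec2 0 0 = 0 := by ext i; fin_cases i <;> simp [vec2]
  rw [← this]
  norm_num

/-- The flow on `K₃,₃`. -/
def K33flow : Sum (Fin 3) (Fin 3) → Sum (Fin 3) (Fin 3) → EuclideanSpace ℝ (Fin 2)
  | .inl i, .inr j => w3 (i + j)
  | .inr j, .inl i => -(w3 (i + j))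
  | _, _ => 0


/-- `K₃,₃` admits a `(2,2)`-NZF: all flow values are unit vectors; in fact one may take
all flow values (up to the sign coming from the choice of direction of each edge) among
the three cube roots of unity. -/
theorem stmt_10 :
    ∃ f, IsNZF (completeBipartiteGraph (Fin 3) (Fin 3)) 2 2 f ∧
      ∀ u v, (completeBipartiteGraph (Fin 3) (Fin 3)).Adj u v →
        (f u v ∈ cubeRoots ∨ -f u v ∈ cubeRoots) := by

  refine ⟨K33flow, ⟨?_, ?_, ?_, ?_⟩, ?_⟩
  · rintro (u|u) (v|v) <;> simp [K33flow]
  · rintro (u|u) (v|v) h <;> simp_all [K33flow]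
  · rintro (u|u) (v|v) h <;> simp only [completeBipartiteGraph] at h <;>
      simp only [K33flow, norm_neg, norm_w3] <;> norm_num
    · exact absurd h (by simp)
    · exact absurd h (by simp)
  · have h := sum_w3
    rintro (v|v) <;>
      · rw [Fintype.sum_sum_type]
        simp only [K33flow, Fin.sum_univ_three, Finset.sum_const_zero, zero_add, add_zero]
        fin_cases v <;>
          · simp only [Fin.isValue, Fin.reduceAdd, ← neg_add, neg_eq_zero]
            rw [← h]; simp only [Fin.reduceFinMk, Fin.reduceAdd, add_comm, add_left_comm]
  · rintro (u|u) (v|v) h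
    · exact absurd h (by simp)
    · exact Or.inl (by simpa [K33flow] using w3_mem _)
    · exact Or.inr (by simpa [K33flow] using w3_mem _)
    · exact absurd h (by simp)
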